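/- Let k be an algebraically closed field of characteristic zero, p, q ≥ 1 integers, c ∈ k*, and let D = a·∂x + b·∂y be a derivation of k[x,y] with D(x^q·y^p − c) = 0. Then there exists g ∈ k[x,y] such that a = p·x·g and b = −q·y·g; equivalently, D = g·(p·x·∂x − q·y·∂y). -/

import Mathlib

open MvPolynomial

lemma mv_prime_X {k : Type*} [Field k] (i : Fin 2) :
    Prime (X i : MvPolynomial (Fin 2) k) := by
  have h0 : Prime (X (0 : Fin 2) : MvPolynomial (Fin 2) k) := by
    have := (MulEquiv.prime_iff (finSuccEquiv k 1).toMulEquiv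
      (p := (X (0 : Fin 2) : MvPolynomial (Fin 2) k))).symm
    rw [this]
    simpa [finSuccEquiv_X_zero] using
      (Polynomial.prime_X : Prime (Polynomial.X : Polynomial (MvPolynomial (Fin 1) k)))
  fin_cases i
  · exact h0
  · show Prime (X (1 : Fin 2) : MvPolynomial (Fin 2) k)
    have := (MulEquiv.prime_iff (renameEquiv k (Equiv.swap (0 : Fin 2) 1)).toMulEquiv
      (p := (X (1 : Fin 2) : MvPolynomial (Fin 2) k))).symm
    rw [this]
    simpa [renameEquiv_apply, rename_X] using h0

lemma X0_not_dvd_X1 {k : Type*} [Field k] :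
    ¬ (X (0 : Fin 2) : MvPolynomial (Fin 2) k) ∣ X 1 := by
  intro ⟨t, ht⟩
  have := congrArg (eval (fun i : Fin 2 => if i = 0 then (0 : k) else 1)) ht
  simp at this

/-- If a derivation `D = a·∂x + b·∂y` of `k[x,y]` annihilates `x^q·y^p − c` (`c ≠ 0`),
then `D = g·(p·x·∂x − q·y·∂y)` for some `g ∈ k[x,y]`. -/
theorem derivation_killing_xqyp_sub_c {k : Type*} [Field k] [CharZero k] [IsAlgClosed k]
    (p q : ℕ) (hp : 1 ≤ p) (hq : 1 ≤ q) (c : k) (hc : c ≠ 0)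
    (a b : MvPolynomial (Fin 2) k)
    (D : Derivation k (MvPolynomial (Fin 2) k) (MvPolynomial (Fin 2) k))
    (hD : ∀ f, D f = a * pderiv (0 : Fin 2) f + b * pderiv (1 : Fin 2) f)
    (h : D (X 0 ^ q * X 1 ^ p - C c) = 0) :
    ∃ g : MvPolynomial (Fin 2) k,
      a = (p : MvPolynomial (Fin 2) k) * X 0 * g ∧
      b = -((q : MvPolynomial (Fin 2) k) * X 1 * g) := by
  obtain ⟨q', rfl⟩ : ∃ q', q = q' + 1 := ⟨q - 1, by omega⟩
  obtain ⟨p', rfl⟩ : ∃ p', p = p' + 1 := ⟨p - 1, by omega⟩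
  rw [hD] at h
  have e0 : (pderiv (0 : Fin 2)) (X 0 ^ (q' + 1) * X 1 ^ (p' + 1) - C c)
      = (q' + 1 : MvPolynomial (Fin 2) k) * X 0 ^ q' * X 1 ^ (p' + 1) := by
    simp [pderiv_X_self, pderiv_X_of_ne, pderiv_pow]
    ring
  have e1 : (pderiv (1 : Fin 2)) (X 0 ^ (q' + 1) * X 1 ^ (p' + 1) - C c)
      = (p' + 1 : MvPolynomial (Fin 2) k) * X 0 ^ (q' + 1) * X 1 ^ p' := by
    simp [pderiv_X_self, pderiv_X_of_ne, pderiv_pow]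
    ring
  rw [e0, e1] at h
  set Cq : MvPolynomial (Fin 2) k := C ((q' + 1 : ℕ) : k) with hCqdef
  set Cp : MvPolynomial (Fin 2) k := C ((p' + 1 : ℕ) : k) with hCpdef
  have hcastq : ((q' + 1 : ℕ) : MvPolynomial (Fin 2) k) = Cq := (map_natCast C _).symm
  have hcastp : ((p' + 1 : ℕ) : MvPolynomial (Fin 2) k) = Cp := (map_natCast C _).symm
  have hqk : ((q' + 1 : ℕ) : k) ≠ 0 := Nat.cast_ne_zero.mpr (Nat.succ_ne_zero _)
  have hpk : ((p' + 1 : ℕ) : k) ≠ 0 := Nat.cast_ne_zero.mpr (Nat.succ_ne_zero _)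
  have hCq1 : Cq * C (((q' + 1 : ℕ) : k)⁻¹) = 1 := by
    rw [hCqdef, ← C_mul, mul_inv_cancel₀ hqk, C_1]
  have hCp1 : Cp * C (((p' + 1 : ℕ) : k)⁻¹) = 1 := by
    rw [hCpdef, ← C_mul, mul_inv_cancel₀ hpk, C_1]
  have hXq : ((q' + 1 : ℕ) : MvPolynomial (Fin 2) k) = ((q' : MvPolynomial (Fin 2) k) + 1) := by
    push_cast; ring
  -- main key equation
  have hq2 : ((q' : MvPolynomial (Fin 2) k) + 1) = Cq := by rw [← hXq, hcastq]
  have hXp : ((p' + 1 : ℕ) : MvPolynomial (Fin 2) k) = ((p' : MvPolynomial (Fin 2) k) + 1) := by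
    push_cast; ring
  have hp2 : ((p' : MvPolynomial (Fin 2) k) + 1) = Cp := by rw [← hXp, hcastp]
  have key : X 0 ^ q' * X 1 ^ p' * (Cq * a * X 1 + Cp * b * X 0) = 0 := by
    rw [← hq2, ← hp2]
    linear_combination h
  have hXX : (X 0 ^ q' * X 1 ^ p' : MvPolynomial (Fin 2) k) ≠ 0 :=
    mul_ne_zero (pow_ne_zero _ (X_ne_zero _)) (pow_ne_zero _ (X_ne_zero _))
  have keq : Cq * a * X 1 + Cp * b * X 0 = 0 := by
    rcases mul_eq_zero.mp key with h' | h'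
    · exact absurd h' hXX
    · exact h'
  -- X 0 divides a
  have hX0 : Prime (X (0 : Fin 2) : MvPolynomial (Fin 2) k) := mv_prime_X 0
  have hX1 : Prime (X (1 : Fin 2) : MvPolynomial (Fin 2) k) := mv_prime_X 1
  have hdvd : (X (0 : Fin 2) : MvPolynomial (Fin 2) k) ∣ (Cq * a) * X 1 :=
    ⟨-(Cp * b), by linear_combination keq⟩
  have hdvda : (X (0 : Fin 2) : MvPolynomial (Fin 2) k) ∣ Cq * a := by
    rcases hX0.2.2 _ _ hdvd with h' | h'
    · exact h'
    · exact absurd h' X0_not_dvd_X1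
  obtain ⟨t, ht⟩ := hdvda
  set a₁ : MvPolynomial (Fin 2) k := C (((q' + 1 : ℕ) : k)⁻¹) * t with ha₁def
  have ha : a = X 0 * a₁ := by
    rw [ha₁def]
    linear_combination C (((q' + 1 : ℕ) : k)⁻¹) * ht - a * hCq1
  -- second equation
  have keq2 : Cq * a₁ * X 1 + Cp * b = 0 := by
    have : (X 0 : MvPolynomial (Fin 2) k) * (Cq * a₁ * X 1 + Cp * b) = 0 := by
      rw [ha] at keq; linear_combination keq
    rcases mul_eq_zero.mp this with h' | h'
    · exact absurd h' (X_ne_zero _)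
    · exact h'
  have hdvdb : (X (1 : Fin 2) : MvPolynomial (Fin 2) k) ∣ Cp * b :=
    ⟨-(Cq * a₁), by linear_combination keq2⟩
  have hdvdb' : (X (1 : Fin 2) : MvPolynomial (Fin 2) k) ∣ b := by
    rcases hX1.2.2 _ _ hdvdb with h' | h'
    · exact absurd (isUnit_of_dvd_unit h' (isUnit_iff_exists_inv.mpr
        ⟨C (((p' + 1 : ℕ) : k)⁻¹), hCp1⟩)) hX1.not_unit
    · exact h'
  obtain ⟨s, hs⟩ := hdvdb'
  have hrel : Cq * a₁ + Cp * s = 0 := by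
    have : (X 1 : MvPolynomial (Fin 2) k) * (Cq * a₁ + Cp * s) = 0 := by
      rw [hs] at keq2; linear_combination keq2
    rcases mul_eq_zero.mp this with h' | h'
    · exact absurd h' (X_ne_zero _)
    · exact h'
  refine ⟨C (((p' + 1 : ℕ) : k)⁻¹) * a₁, ?_, ?_⟩
  · rw [hcastp]
    linear_combination ha - (X 0 * a₁) * hCp1
  · rw [hcastq]
    linear_combination hs + X 1 * C (((p' + 1 : ℕ) : k)⁻¹) * hrel - (X 1 * s) * hCp1
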